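/- As κ → 0⁺, both asymptotic variances n·var(κ̂_MLE) = 1/(1 − A₁(κ)² − A₁(κ)/κ) and n·var(κ̂_SME) = (κ/A₁(κ)²)(2κ − 3A₁(κ)) converge to 2; hence the asymptotic relative efficiency ARE(κ) → 1 as κ → 0⁺. -/

import Mathlib

open Real Filter intervalIntegral

/-- Modified Bessel function of the first kind of integer order `ν`. -/
noncomputable def besselI (ν : ℕ) (κ : ℝ) : ℝ :=
  (1 / π) * ∫ θ in (0:ℝ)..π, Real.exp (κ * Real.cos θ) * Real.cos (ν * θ)

/-- `A₁(κ) = I₁(κ)/I₀(κ)`. -/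
noncomputable def A1 (κ : ℝ) : ℝ := besselI 1 κ / besselI 0 κ

lemma besselI0_eq (κ : ℝ) : besselI 0 κ = (1 / π) * ∫ θ in (0:ℝ)..π, Real.exp (κ * Real.cos θ) := by
  simp [besselI]

lemma besselI1_eq (κ : ℝ) :
    besselI 1 κ = (1 / π) * ∫ θ in (0:ℝ)..π, Real.exp (κ * Real.cos θ) * Real.cos θ := by
  simp [besselI]

lemma besselI0_bound {κ : ℝ} (h0 : 0 < κ) (h1 : κ ≤ 1) : |besselI 0 κ - 1| ≤ 2 * κ := by
  have hπ : (0:ℝ) < π := Real.pi_pos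
  have hi1 : IntervalIntegrable (fun θ : ℝ => Real.exp (κ * Real.cos θ))
      MeasureTheory.volume 0 π :=
    (Real.continuous_exp.comp (continuous_const.mul Real.continuous_cos)).intervalIntegrable _ _
  have hi2 : IntervalIntegrable (fun _ : ℝ => (1:ℝ)) MeasureTheory.volume 0 π :=
    intervalIntegrable_const
  have key : besselI 0 κ - 1
      = (1 / π) * ∫ θ in (0:ℝ)..π, (Real.exp (κ * Real.cos θ) - 1) := by
    rw [intervalIntegral.integral_sub hi1 hi2, besselI0_eq]
    simp [mul_sub, hπ.ne']
  have hb : ∀ θ ∈ Set.uIoc (0:ℝ) π, ‖Real.exp (κ * Real.cos θ) - 1‖ ≤ 2 * κ := by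
    intro θ _
    have habs : |κ * Real.cos θ| ≤ κ := by
      rw [abs_mul, abs_of_pos h0]
      nlinarith [Real.abs_cos_le_one θ, abs_nonneg (Real.cos θ)]
    have := Real.abs_exp_sub_one_le (x := κ * Real.cos θ) (le_trans habs h1)
    calc ‖Real.exp (κ * Real.cos θ) - 1‖ ≤ 2 * |κ * Real.cos θ| := this
      _ ≤ 2 * κ := by linarith
  have hnorm := intervalIntegral.norm_integral_le_of_norm_le_const hb
  rw [key, abs_mul, abs_of_pos (by positivity : (0:ℝ) < 1/π)]
  rw [sub_zero, abs_of_pos hπ] at hnorm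
  calc (1/π) * |∫ θ in (0:ℝ)..π, (Real.exp (κ * Real.cos θ) - 1)|
      ≤ (1/π) * (2 * κ * π) := by
        apply mul_le_mul_of_nonneg_left hnorm (by positivity)
    _ = 2 * κ := by field_simp
  -- done

lemma besselI1_bound {κ : ℝ} (h0 : 0 < κ) (h1 : κ ≤ 1) : |besselI 1 κ - κ / 2| ≤ κ ^ 2 := by
  have hπ : (0:ℝ) < π := Real.pi_pos
  have hc1 : Continuous fun θ : ℝ => Real.exp (κ * Real.cos θ) * Real.cos θ :=
    (Real.continuous_exp.comp (continuous_const.mul Real.continuous_cos)).mul Real.continuous_cos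
  have hc2 : Continuous fun θ : ℝ => Real.cos θ + κ * Real.cos θ ^ 2 := by continuity
  have hi1 : IntervalIntegrable (fun θ : ℝ => Real.exp (κ * Real.cos θ) * Real.cos θ)
      MeasureTheory.volume 0 π := hc1.intervalIntegrable _ _
  have hi2 : IntervalIntegrable (fun θ : ℝ => Real.cos θ + κ * Real.cos θ ^ 2)
      MeasureTheory.volume 0 π := hc2.intervalIntegrable _ _
  have hcos : (∫ θ in (0:ℝ)..π, Real.cos θ) = 0 := by simp [integral_cos]
  have hcossq : (∫ θ in (0:ℝ)..π, Real.cos θ ^ 2) = π / 2 := by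
    rw [integral_cos_sq]; simp
  have hsum : (∫ θ in (0:ℝ)..π, (Real.cos θ + κ * Real.cos θ ^ 2)) = κ * (π / 2) := by
    rw [intervalIntegral.integral_add (f := fun θ => Real.cos θ) (g := fun θ => κ * Real.cos θ ^ 2)
      (Real.continuous_cos.intervalIntegrable _ _)
      ((continuous_const.mul (Real.continuous_cos.pow 2)).intervalIntegrable _ _),
      intervalIntegral.integral_const_mul, hcos, hcossq]
    ring
  have key : besselI 1 κ - κ / 2
      = (1 / π) * ∫ θ in (0:ℝ)..π,
          (Real.exp (κ * Real.cos θ) * Real.cos θ - (Real.cos θ + κ * Real.cos θ ^ 2)) := by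
    rw [besselI1_eq, intervalIntegral.integral_sub hi1 hi2, hsum, mul_sub]
    have : (1/π) * (κ * (π/2)) = κ/2 := by
      field_simp
    rw [this]
  have hb : ∀ θ ∈ Set.uIoc (0:ℝ) π,
      ‖Real.exp (κ * Real.cos θ) * Real.cos θ - (Real.cos θ + κ * Real.cos θ ^ 2)‖ ≤ κ ^ 2 := by
    intro θ _
    have habs : |κ * Real.cos θ| ≤ κ := by
      rw [abs_mul, abs_of_pos h0]
      nlinarith [Real.abs_cos_le_one θ, abs_nonneg (Real.cos θ)]
    have hrem := Real.abs_exp_sub_one_sub_id_le (x := κ * Real.cos θ) (le_trans habs h1)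
    have heq : Real.exp (κ * Real.cos θ) * Real.cos θ - (Real.cos θ + κ * Real.cos θ ^ 2)
        = (Real.exp (κ * Real.cos θ) - 1 - κ * Real.cos θ) * Real.cos θ := by ring
    rw [heq]
    have : ‖(Real.exp (κ * Real.cos θ) - 1 - κ * Real.cos θ) * Real.cos θ‖
        = |Real.exp (κ * Real.cos θ) - 1 - κ * Real.cos θ| * |Real.cos θ| := abs_mul _ _
    rw [this]
    have h2 : (κ * Real.cos θ) ^ 2 ≤ κ ^ 2 := by
      have := sq_abs (κ * Real.cos θ)
      nlinarith [habs, abs_nonneg (κ * Real.cos θ)]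
    calc |Real.exp (κ * Real.cos θ) - 1 - κ * Real.cos θ| * |Real.cos θ|
        ≤ (κ * Real.cos θ) ^ 2 * 1 := by
          apply mul_le_mul hrem (Real.abs_cos_le_one θ) (abs_nonneg _)
          positivity
      _ ≤ κ ^ 2 := by linarith
  have hnorm := intervalIntegral.norm_integral_le_of_norm_le_const hb
  rw [key, abs_mul, abs_of_pos (by positivity : (0:ℝ) < 1/π)]
  rw [sub_zero, abs_of_pos hπ] at hnorm
  calc (1/π) * ‖∫ θ in (0:ℝ)..π,
        (Real.exp (κ * Real.cos θ) * Real.cos θ - (Real.cos θ + κ * Real.cos θ ^ 2))‖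
      ≤ (1/π) * (κ ^ 2 * π) := by
        apply mul_le_mul_of_nonneg_left hnorm (by positivity)
    _ = κ ^ 2 := by field_simp

lemma eventually_mem : ∀ᶠ κ : ℝ in nhdsWithin 0 (Set.Ioi 0), 0 < κ ∧ κ ≤ 1 := by
  have h1 : ∀ᶠ κ : ℝ in nhdsWithin 0 (Set.Ioi 0), κ ∈ Set.Ioi (0:ℝ) := self_mem_nhdsWithin
  have h2 : ∀ᶠ κ : ℝ in nhdsWithin 0 (Set.Ioi 0), κ < 1 :=
    ((tendsto_id.mono_left nhdsWithin_le_nhds).eventually (eventually_lt_nhds one_pos))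
  filter_upwards [h1, h2] with κ hκ hκ1
  exact ⟨hκ, le_of_lt hκ1⟩

lemma tendsto_besselI0 : Tendsto (besselI 0) (nhdsWithin 0 (Set.Ioi 0)) (nhds 1) := by
  have h : Tendsto (fun κ => besselI 0 κ - 1) (nhdsWithin 0 (Set.Ioi 0)) (nhds 0) := by
    apply squeeze_zero_norm' (a := fun κ => 2 * κ)
    · filter_upwards [eventually_mem] with κ ⟨h0, h1⟩
      exact besselI0_bound h0 h1
    · have : Tendsto (fun κ : ℝ => 2 * κ) (nhds 0) (nhds 0) := by
        simpa using (tendsto_id (x := nhds (0:ℝ))).const_mul 2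
      exact this.mono_left nhdsWithin_le_nhds
  simpa using h.add_const 1

lemma tendsto_besselI1_div : Tendsto (fun κ => besselI 1 κ / κ)
    (nhdsWithin 0 (Set.Ioi 0)) (nhds (1/2)) := by
  have h : Tendsto (fun κ => besselI 1 κ / κ - 1/2) (nhdsWithin 0 (Set.Ioi 0)) (nhds 0) := by
    apply squeeze_zero_norm' (a := fun κ => κ)
    · filter_upwards [eventually_mem] with κ ⟨h0, h1⟩
      have hb := besselI1_bound h0 h1
      have : besselI 1 κ / κ - 1/2 = (besselI 1 κ - κ/2) / κ := by
        rw [sub_div, div_right_comm, div_self h0.ne']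
      rw [this, norm_div, Real.norm_of_nonneg h0.le]
      rw [div_le_iff₀ h0]
      calc ‖besselI 1 κ - κ/2‖ ≤ κ ^ 2 := hb
        _ = κ * κ := sq κ
    · exact tendsto_id.mono_left nhdsWithin_le_nhds
  have heq : (fun κ : ℝ => besselI 1 κ / κ) = fun κ => (besselI 1 κ / κ - 1/2) + 1/2 := by
    funext κ; ring
  rw [heq]
  convert h.add_const (1/2) using 2
  norm_num

lemma tendsto_ratio : Tendsto (fun κ => A1 κ / κ) (nhdsWithin 0 (Set.Ioi 0)) (nhds (1/2)) := by
  have h : Tendsto (fun κ : ℝ => besselI 1 κ / κ / besselI 0 κ)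
      (nhdsWithin 0 (Set.Ioi 0)) (nhds (1/2/1)) :=
    tendsto_besselI1_div.div tendsto_besselI0 one_ne_zero
  norm_num at h
  exact h.congr fun κ => by rw [A1, div_right_comm]

lemma tendsto_A1 : Tendsto A1 (nhdsWithin 0 (Set.Ioi 0)) (nhds 0) := by
  have h := tendsto_ratio.mul (tendsto_id.mono_left nhdsWithin_le_nhds :
    Tendsto (fun κ : ℝ => κ) (nhdsWithin 0 (Set.Ioi 0)) (nhds 0))
  rw [mul_zero] at h
  apply h.congr'
  filter_upwards [eventually_mem] with κ ⟨h0, _⟩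
  exact div_mul_cancel₀ _ h0.ne'

/-- Limit of the MLE-variance denominator. -/
lemma tendsto_den : Tendsto (fun κ : ℝ => 1 - A1 κ ^ 2 - A1 κ / κ)
    (nhdsWithin 0 (Set.Ioi 0)) (nhds (1/2)) := by
  have h : Tendsto (fun κ : ℝ => 1 - A1 κ ^ 2 - A1 κ / κ)
      (nhdsWithin 0 (Set.Ioi 0)) (nhds (1 - 0 ^ 2 - 1/2)) :=
    (tendsto_const_nhds.sub (tendsto_A1.pow 2)).sub tendsto_ratio
  norm_num at h
  exact h

/-- As `κ → 0⁺`, both asymptotic variances `n·var(κ̂_MLE) = 1/(1 − A₁² − A₁/κ)` and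
`n·var(κ̂_SME) = (κ/A₁²)(2κ − 3A₁)` converge to 2; hence the asymptotic relative
efficiency converges to 1. -/
theorem stmt_13 :
    Tendsto (fun κ : ℝ => 1 / (1 - A1 κ ^ 2 - A1 κ / κ))
      (nhdsWithin 0 (Set.Ioi 0)) (nhds 2) ∧
    Tendsto (fun κ : ℝ => (κ / A1 κ ^ 2) * (2 * κ - 3 * A1 κ))
      (nhdsWithin 0 (Set.Ioi 0)) (nhds 2) ∧
    Tendsto (fun κ : ℝ =>
        A1 κ ^ 2 / ((2 * κ - 3 * A1 κ) * (κ - κ * A1 κ ^ 2 - A1 κ)))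
      (nhdsWithin 0 (Set.Ioi 0)) (nhds 1) := by
  set L := nhdsWithin (0:ℝ) (Set.Ioi 0)
  have hr := tendsto_ratio
  have hd := tendsto_den
  refine ⟨?_, ?_, ?_⟩
  · have h : Tendsto (fun κ : ℝ => 1 / (1 - A1 κ ^ 2 - A1 κ / κ)) L (nhds (1 / (1/2))) :=
      tendsto_const_nhds.div hd (by norm_num)
    convert h using 2
    norm_num
  · -- second limit
    have h2 : Tendsto (fun κ : ℝ => (2 - 3 * (A1 κ / κ)) / (A1 κ / κ) ^ 2) L (nhds 2) := by
      have h : Tendsto (fun κ : ℝ => (2 - 3 * (A1 κ / κ)) / (A1 κ / κ) ^ 2) L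
          (nhds ((2 - 3 * (1/2)) / (1/2) ^ 2)) :=
        (tendsto_const_nhds.sub (hr.const_mul 3)).div (hr.pow 2) (by norm_num)
      norm_num at h
      exact h
    apply h2.congr'
    filter_upwards [eventually_mem] with κ ⟨h0, _⟩
    by_cases hA : A1 κ = 0
    · simp [hA]
    · field_simp
  · -- third limit
    have h3 : Tendsto (fun κ : ℝ =>
        (A1 κ / κ) ^ 2 / ((2 - 3 * (A1 κ / κ)) * (1 - A1 κ ^ 2 - A1 κ / κ))) L (nhds 1) := by
      have h : Tendsto (fun κ : ℝ =>
          (A1 κ / κ) ^ 2 / ((2 - 3 * (A1 κ / κ)) * (1 - A1 κ ^ 2 - A1 κ / κ))) L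
          (nhds ((1/2) ^ 2 / ((2 - 3 * (1/2)) * (1/2)))) :=
        (hr.pow 2).div ((tendsto_const_nhds.sub (hr.const_mul 3)).mul hd) (by norm_num)
      norm_num at h
      exact h
    apply h3.congr'
    filter_upwards [eventually_mem] with κ ⟨h0, _⟩
    have hκ : κ ≠ 0 := h0.ne'
    have e1 : 2 * κ - 3 * A1 κ = κ * (2 - 3 * (A1 κ / κ)) := by field_simp <;> ring
    have e2 : κ - κ * A1 κ ^ 2 - A1 κ = κ * (1 - A1 κ ^ 2 - A1 κ / κ) := by field_simp <;> ring
    have e3 : A1 κ ^ 2 = κ ^ 2 * (A1 κ / κ) ^ 2 := by field_simp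
    rw [show (A1 κ / κ) ^ 2 / ((2 - 3 * (A1 κ / κ)) * (1 - A1 κ ^ 2 - A1 κ / κ))
        = κ ^ 2 * (A1 κ / κ) ^ 2 / (κ ^ 2 * ((2 - 3 * (A1 κ / κ)) * (1 - A1 κ ^ 2 - A1 κ / κ)))
        from (mul_div_mul_left _ _ (pow_ne_zero 2 hκ)).symm]
    rw [e1, e2, ← e3]
    congr 1
    ring
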